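/- Any class 𝔉 of graphs of size λ with Forb_λ(P_ω) ⊆ 𝔉 ⊆ Forb^ind_λ(R) has cofinality (with respect to induced-subgraph embeddability) at least λ⁺: no family of fewer than λ⁺ members of 𝔉 is cofinal, i.e., for every family {H_i : i ∈ I} ⊆ 𝔉 with |I| ≤ λ there exists G' ∈ 𝔉 embedding into no H_i. -/

import Mathlib

open Cardinal Ordinal

/-- The poset `T α`: strictly decreasing finite lists of ordinals `< α`, ordered by
reverse strict-prefix; the empty list is the top element, and the lists starting with `β`
form the copy of `T β`. -/
def TT (α : Ordinal) : Type 1 :=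
  {l : List Ordinal // l.Pairwise (· > ·) ∧ ∀ x ∈ l, x < α}

instance instPOTT (α : Ordinal) : PartialOrder (TT α) where
  le u v := v.1 <+: u.1
  le_refl u := List.prefix_refl _
  le_trans _ _ _ h1 h2 := List.IsPrefix.trans h2 h1
  le_antisymm _ _ h1 h2 :=
    Subtype.ext (List.IsPrefix.eq_of_length h2 ((List.IsPrefix.length_le h2).antisymm (List.IsPrefix.length_le h1)))

/-- The top element of `T α`. -/
def topT (α : Ordinal) : TT α := ⟨[], by simp, by simp⟩

/-- The rank function of the reversed order `⟨T α, >⟩`. -/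
def dT {α : Ordinal} (v : TT α) : ℕ := v.1.length

/-- The rank function of `⟨T α, <⟩`; the top element has rank `α`. -/
def rT {α : Ordinal} (v : TT α) : Ordinal := v.1.getLastD α

/-- The graph `G_α` on `T α`: `u ~ v` iff `u, v` are comparable and `d u ~_G d v`. -/
def Gg (G : SimpleGraph ℕ) (α : Ordinal) : SimpleGraph (TT α) where
  Adj u v := u ≠ v ∧ (u ≤ v ∨ v ≤ u) ∧ G.Adj (dT u) (dT v)
  symm := ⟨fun _ _ h => ⟨Ne.symm h.1, h.2.1.symm, h.2.2.symm⟩⟩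
  loopless := ⟨fun _ h => h.1 rfl⟩

/-- The one-way infinite path `P_ω` on `ℕ`. -/
def rayG : SimpleGraph ℕ := SimpleGraph.fromRel (fun m n => n = m + 1)

/-- `A` is a (not necessarily induced) subgraph of `B`. -/
def SubCopy {X Y : Type*} (A : SimpleGraph X) (B : SimpleGraph Y) : Prop :=
  ∃ f : X ↪ Y, ∀ u v, A.Adj u v → B.Adj (f u) (f v)

/-- `R` is (isomorphic to) the countable random graph: the extension property. -/
def IsRado (R : SimpleGraph ℕ) : Prop :=
  ∀ A B : Finset ℕ, Disjoint A B →
    ∃ v, v ∉ A ∧ v ∉ B ∧ (∀ a ∈ A, R.Adj v a) ∧ (∀ b ∈ B, ¬R.Adj v b)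

/-- An `(s, ξ)`-embedding: an induced embedding of some `G_α`, `ξ ≤ α < λ⁺`, into `H`
whose image contains `s` as the top part of a chain with `d`-values `0, …, n` and whose
last vertex has rank `> ξ`. -/
def IsSXEmb {V : Type} (G : SimpleGraph ℕ) (lam : Cardinal) (H : SimpleGraph V)
    (s : List V) (ξ : Ordinal) : Prop :=
  ∃ α : Ordinal, ξ ≤ α ∧ α < (Order.succ lam).ord ∧
    ∃ (f : Gg G α ↪g H) (t : List (TT α)),
      s = t.map ⇑f ∧
      (∀ i : Fin t.length, dT (t.get i) = i.1) ∧
      (∀ u ∈ t, ∀ v ∈ t, u ≤ v ∨ v ≤ u) ∧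
      (∀ v ∈ t.getLast?, ξ < rT v)

/-- The set `U` of finite sequences admitting `(s, ξ)`-embeddings for all `ξ < λ⁺`. -/
def UU {V : Type} (G : SimpleGraph ℕ) (lam : Cardinal) (H : SimpleGraph V) :
    Set (List V) :=
  {s | ∀ ξ < (Order.succ lam).ord, IsSXEmb G lam H s ξ}


def radoG : SimpleGraph ℕ where
  Adj m n := m ≠ n ∧ Nat.testBit (max m n) (min m n)
  symm := ⟨by intro m n h; exact ⟨h.1.symm, by rw [max_comm, min_comm]; exact h.2⟩⟩
  loopless := ⟨fun n h => h.1 rfl⟩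

def codeL : List ℕ → ℕ
  | [] => 0
  | a :: l => 2 ^ a ||| codeL l

lemma testBit_codeL (l : List ℕ) (j : ℕ) : (codeL l).testBit j = true ↔ j ∈ l := by
  induction l with
  | nil => simp [codeL]
  | cons a l ih =>
    simp only [codeL, Nat.testBit_lor, Bool.or_eq_true, ih, List.mem_cons]
    constructor
    · rintro (h | h)
      · left
        by_contra hne
        rw [Nat.testBit_two_pow_of_ne (fun he => hne he.symm)] at h
        exact Bool.false_ne_true h
      · exact Or.inr h
    · rintro (rfl | h)
      · exact Or.inl (by simp)
      · exact Or.inr h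

lemma radoG_isRado : IsRado radoG := by
  intro A B hAB
  set N := (A ∪ B).sup id + 1 with hN
  have hlt : ∀ x ∈ A ∪ B, x < N := by
    intro x hx
    exact Nat.lt_succ_of_le (Finset.le_sup (f := id) hx)
  set v := 2 ^ N ||| codeL A.toList with hv
  have hbit : ∀ j, v.testBit j = true ↔ j = N ∨ j ∈ A := by
    intro j
    rw [hv, Nat.testBit_lor, Bool.or_eq_true, testBit_codeL, Finset.mem_toList]
    constructor
    · rintro (h | h)
      · left; by_contra hne; rw [Nat.testBit_two_pow_of_ne (fun he => hne he.symm)] at h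
        exact Bool.false_ne_true h
      · exact Or.inr h
    · rintro (rfl | h)
      · exact Or.inl (by simp)
      · exact Or.inr h
  have hvN : v.testBit N = true := (hbit N).2 (Or.inl rfl)
  have hvge : 2 ^ N ≤ v := by
    by_contra hc
    rw [Nat.testBit_eq_false_of_lt (Nat.lt_of_not_le hc)] at hvN
    exact Bool.false_ne_true hvN
  have hbig : ∀ x ∈ A ∪ B, x < v := fun x hx =>
    lt_of_lt_of_le (lt_trans (hlt x hx) (Nat.lt_two_pow_self (n := N))) hvge
  refine ⟨v, ?_, ?_, ?_, ?_⟩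
  · intro h; exact absurd (hbig v (Finset.mem_union_left _ h)) (lt_irrefl _)
  · intro h; exact absurd (hbig v (Finset.mem_union_right _ h)) (lt_irrefl _)
  · intro a ha
    have hav : a < v := hbig a (Finset.mem_union_left _ ha)
    refine ⟨(Nat.ne_of_lt hav).symm, ?_⟩
    rw [max_eq_left hav.le, min_eq_right hav.le]
    exact (hbit a).2 (Or.inr ha)
  · intro b hb hadj
    obtain ⟨hne, hadj⟩ := hadj
    have hbv : b < v := hbig b (Finset.mem_union_right _ hb)
    rw [max_eq_left hbv.le, min_eq_right hbv.le] at hadj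
    rcases (hbit b).1 hadj with hbN | h
    · have hc := hlt b (Finset.mem_union_right _ hb)
      rw [hbN] at hc
      exact lt_irrefl _ hc
    · exact Finset.disjoint_left.1 hAB h hb


lemma TT.le_def {α : Ordinal} (u v : TT α) : u ≤ v ↔ v.1 <+: u.1 := Iff.rfl

/-- prefix of a nonempty list shares its head -/
lemma head_of_prefix {l l' : List Ordinal} (h : l <+: l') (hne : l ≠ []) (hne' : l' ≠ []) :
    l.head hne = l'.head hne' := by
  obtain ⟨r, rfl⟩ := h
  exact (List.head_append_left hne).symm

lemma no_chain_seq (α : Ordinal) (u : ℕ → TT α) (hinj : Function.Injective u)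
    (hcomp : ∀ n, u n ≤ u (n + 1) ∨ u (n + 1) ≤ u n) : False := by
  induction α using Ordinal.induction with
  | h α IH =>
  -- Step A: shift past the (at most one) empty list
  obtain ⟨N, hN⟩ : ∃ N : ℕ, ∀ n, (u (n + N)).1 ≠ [] := by
    by_cases hex : ∃ k, (u k).1 = []
    · obtain ⟨k, hk⟩ := hex
      refine ⟨k + 1, fun n hn => ?_⟩
      have h2 : u (n + (k + 1)) = u k := Subtype.ext (hn.trans hk.symm)
      have := hinj h2
      omega
    · push_neg at hex
      exact ⟨0, fun n => hex _⟩
  set w : ℕ → TT α := fun n => u (n + N) with hw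
  have hwinj : Function.Injective w := fun a b h => by
    have := hinj h; omega
  have hwcomp : ∀ n, w n ≤ w (n + 1) ∨ w (n + 1) ≤ w n := by
    intro n
    have := hcomp (n + N)
    simpa [hw, Nat.add_right_comm] using this
  -- Step B: all heads are equal
  have hhead : ∀ n, (w (n + 1)).1.head (hN _) = (w n).1.head (hN _) := by
    intro n
    rcases hwcomp n with h | h
    · exact (head_of_prefix h (hN _) (hN _))
    · exact (head_of_prefix h (hN _) (hN _)).symm
  have hheads : ∀ n, (w n).1.head (hN _) = (w 0).1.head (hN _) := by
    intro n
    induction n with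
    | zero => rfl
    | succ n ih => rw [hhead n]; exact ih
  set β : Ordinal := (w 0).1.head (hN _) with hβ
  have hβα : β < α := (w 0).2.2 _ (List.head_mem _)
  -- Step C: the tails give a sequence in TT β
  have hcons : ∀ n, (w n).1 = β :: (w n).1.tail := by
    intro n
    conv_lhs => rw [← List.cons_head_tail (l := (w n).1) (hN _)]
    rw [hheads n]
  have htaillt : ∀ n, ∀ x ∈ (w n).1.tail, x < β := by
    intro n x hx
    have hs := (w n).2.1
    rw [hcons n] at hs
    exact (List.pairwise_cons.1 hs).1 x hx
  set u' : ℕ → TT β := fun n => ⟨(w n).1.tail, (w n).2.1.tail, htaillt n⟩ with hu'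
  have hinj' : Function.Injective u' := by
    intro a b h
    apply hwinj
    apply Subtype.ext
    rw [hcons a, hcons b]
    exact congrArg (β :: ·) (congrArg Subtype.val h)
  have hcomp' : ∀ n, u' n ≤ u' (n + 1) ∨ u' (n + 1) ≤ u' n := by
    intro n
    rcases hwcomp n with h | h
    · left
      rw [TT.le_def] at h ⊢
      rw [hcons n, hcons (n+1)] at h
      exact (List.cons_prefix_cons.1 h).2
    · right
      rw [TT.le_def] at h ⊢
      rw [hcons n, hcons (n+1)] at h
      exact (List.cons_prefix_cons.1 h).2
  exact IH β hβα u' hinj' hcomp'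


lemma pmap_val (α : Ordinal) (x : TT α) :
    (x.1.pmap Subtype.mk x.2.2).map Subtype.val = x.1 := by
  rw [List.map_pmap]; exact List.pmap_eq_map _ ▸ (List.map_id _)

lemma TT_emb {V : Type} {lam : Cardinal} (hlam : Cardinal.aleph0 ≤ lam)
    (hV : Cardinal.mk V = lam) {α : Ordinal} (hα : α < (Order.succ lam).ord) :
    Nonempty (TT α ↪ V) := by
  have hcard : α.card ≤ lam := Order.lt_succ_iff.1 ((Cardinal.lt_ord).1 hα)
  have h1 : Cardinal.mk (TT α) ≤ Cardinal.mk (List {x : Ordinal // x < α}) := by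
    refine ⟨⟨fun l => l.1.pmap Subtype.mk l.2.2, ?_⟩⟩
    intro x y h
    simp only at h
    apply Subtype.ext
    rw [← pmap_val α x, ← pmap_val α y, h]
  have h2 : Cardinal.mk (List {x : Ordinal // x < α}) ≤
      max Cardinal.aleph0 (Cardinal.mk {x : Ordinal // x < α}) := Cardinal.mk_list_le_max _
  have h3 : Cardinal.mk {x : Ordinal // x < α} = Cardinal.lift.{1} α.card := by
    exact Cardinal.mk_Iio_ordinal α
  have h4 : Cardinal.mk (TT α) ≤ Cardinal.lift.{1} lam := by
    refine (h1.trans h2).trans ?_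
    rw [h3]
    apply max_le
    · rw [show (Cardinal.aleph0 : Cardinal.{1}) = Cardinal.lift.{1,0} Cardinal.aleph0 from (Cardinal.lift_aleph0).symm]
      exact Cardinal.lift_le.2 hlam
    · exact Cardinal.lift_le.2 hcard
  rw [← hV] at h4
  exact Cardinal.lift_mk_le'.1 (by simpa using h4)



/-- last element of a decreasingly sorted list is the least -/
lemma sorted_getLast_le {l : List Ordinal} (hl : l.Pairwise (· > ·)) (hne : l ≠ [])
    {x : Ordinal} (hx : x ∈ l) : l.getLast hne ≤ x := by
  induction l with
  | nil => exact absurd rfl hne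
  | cons a l ih =>
    rcases List.mem_cons.1 hx with rfl | hx'
    · by_cases hl' : l = []
      · subst hl'; simp [List.getLast]
      · rw [List.getLast_cons hl']
        have := (List.pairwise_cons.1 hl).1 _ (List.getLast_mem hl')
        exact this.le
    · by_cases hl' : l = []
      · simp [hl'] at hx'
      · rw [List.getLast_cons hl']
        exact ih (List.pairwise_cons.1 hl).2 hl' hx'

lemma rT_le {α : Ordinal} (w : TT α) : rT w ≤ α := by
  unfold rT
  by_cases h : w.1 = []
  · simp [h]
  · rw [List.getLastD_eq_getLast? , List.getLast?_eq_getLast h]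
    exact (w.2.2 _ (List.getLast_mem h)).le

/-- monotonicity of (s,ξ)-embeddings in ξ -/
lemma IsSXEmb.mono {V : Type} {G : SimpleGraph ℕ} {lam : Cardinal} {H : SimpleGraph V}
    {s : List V} {ξ ξ' : Ordinal} (h : IsSXEmb G lam H s ξ) (hle : ξ' ≤ ξ) :
    IsSXEmb G lam H s ξ' := by
  obtain ⟨α, h1, h2, f, t, h3, h4, h5, h6⟩ := h
  exact ⟨α, hle.trans h1, h2, f, t, h3, h4, h5, fun v hv => lt_of_le_of_lt hle (h6 v hv)⟩


lemma L_limit {lam : Cardinal} (hlam : Cardinal.aleph0 ≤ lam) :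
    Order.IsSuccLimit ((Order.succ lam).ord) :=
  Cardinal.isSuccLimit_ord (hlam.trans (Order.le_succ lam))

lemma L_pos {lam : Cardinal} (hlam : Cardinal.aleph0 ≤ lam) :
    (0 : Ordinal) < (Order.succ lam).ord := (L_limit hlam).pos

lemma L_succ_lt {lam : Cardinal} (hlam : Cardinal.aleph0 ≤ lam) {ξ : Ordinal}
    (h : ξ < (Order.succ lam).ord) :
    ξ + 1 < (Order.succ lam).ord := by
  rw [Ordinal.add_one_eq_succ]; exact (L_limit hlam).succ_lt h

lemma ord_lt_add_one (ξ : Ordinal) : ξ < ξ + 1 := by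
  rw [Ordinal.add_one_eq_succ]; exact Order.lt_succ ξ

/-- the extension step: an (s, ξ+1)-embedding yields an (s++[v], ξ)-embedding -/
lemma step_ext {V : Type} {lam : Cardinal} {R : SimpleGraph ℕ} {H : SimpleGraph V}
    {s : List V} {ξ : Ordinal} (h : IsSXEmb R lam H s (ξ + 1)) :
    ∃ v : V, IsSXEmb R lam H (s ++ [v]) ξ := by
  obtain ⟨α, h1, h2, f, t, h3, h4, h5, h6⟩ := h
  have hξ1 : ξ < ξ + 1 := ord_lt_add_one ξ
  have hξα : ξ ≤ α := (hξ1.le).trans h1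
  by_cases ht : t = []
  · -- t empty: use the top of TT α
    subst ht
    refine ⟨f (topT α), α, hξα, h2, f, [topT α], by simp [h3], ?_, ?_, ?_⟩
    · intro i
      have hi : i.1 = 0 := Nat.lt_one_iff.1 (by simpa using i.2)
      simp [hi, topT, dT]
      rfl
    · intro u hu v hv
      simp at hu hv
      subst hu; subst hv; left; exact le_refl _
    · intro v hv
      simp at hv
      subst hv
      have : rT (topT α) = α := by simp [rT, topT]
      rw [this]
      exact lt_of_lt_of_le hξ1 h1
  · -- t nonempty: extend the last node by a child with rank ξ+1
    set w := t.getLast ht with hwdef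
    have hw6 : ξ + 1 < rT w := h6 w (by rw [List.getLast?_eq_getLast ht]; rfl)
    have hγα : ξ + 1 < α := lt_of_lt_of_le hw6 (rT_le w)
    have hsorted : (w.1 ++ [ξ + 1]).Pairwise (· > ·) := by
      rw [List.pairwise_append]
      refine ⟨w.2.1, List.pairwise_singleton _ _, ?_⟩
      intro x hx y hy
      simp only [List.mem_singleton] at hy
      subst hy
      by_cases hwe : w.1 = []
      · simp [hwe] at hx
      · have h1' : w.1.getLast hwe ≤ x := sorted_getLast_le w.2.1 hwe hx
        have h2' : rT w = w.1.getLast hwe := by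
          unfold rT
          rw [List.getLastD_eq_getLast?, List.getLast?_eq_getLast hwe]
          rfl
        exact lt_of_lt_of_le (h2' ▸ hw6) h1'
    have hbound : ∀ x ∈ w.1 ++ [ξ + 1], x < α := by
      intro x hx
      rcases List.mem_append.1 hx with hx | hx
      · exact w.2.2 _ hx
      · simp only [List.mem_singleton] at hx; subst hx; exact hγα
    set u : TT α := ⟨w.1 ++ [ξ + 1], hsorted, hbound⟩ with hu
    have htpos : 0 < t.length := List.length_pos_iff.2 ht
    have hwlen : (w.1).length = t.length - 1 := by
      have hlt : t.length - 1 < t.length := Nat.sub_lt htpos one_pos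
      have hh := h4 ⟨t.length - 1, hlt⟩
      rw [hwdef, List.getLast_eq_getElem]
      simpa [dT] using hh
    have hulen : (u.1).length = t.length := by
      rw [hu]
      simp only [List.length_append, List.length_singleton]
      rw [hwlen]
      omega
    -- every element of t is above u
    have habove : ∀ x ∈ t, u ≤ x := by
      intro x hx
      obtain ⟨i, hi⟩ := List.mem_iff_get.1 hx
      have hxlen : (x.1).length = i.1 := by
        have := h4 i
        rw [hi] at this
        simpa [dT] using this
      have hxw : x.1 <+: w.1 := by
        rcases h5 x hx w (hwdef ▸ List.getLast_mem ht) with hc | hc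
        · -- x ≤ w : w.1 <+: x.1, but x is shorter or equal, so equal
          have hlen : (x.1).length ≤ (w.1).length := by
            rw [hxlen, hwlen]
            have := i.2
            omega
          have : w.1 = x.1 := List.IsPrefix.eq_of_length_le hc hlen
          rw [← this]
        · exact hc
      show x.1 <+: u.1
      rw [hu]
      exact hxw.trans (List.prefix_append _ _)
    refine ⟨f u, α, hξα, h2, f, t ++ [u], by rw [h3, List.map_append]; rfl, ?_, ?_, ?_⟩
    · -- dT condition
      intro i
      have hilen : i.1 < t.length + 1 := by simpa using i.2
      by_cases hi : i.1 < t.length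
      · have := h4 ⟨i.1, hi⟩
        simp only [List.get_eq_getElem] at this ⊢
        rwa [List.getElem_append_left hi]
      · have hieq : i.1 = t.length := by omega
        simp only [List.get_eq_getElem]
        rw [List.getElem_concat_length hieq, hieq]
        exact hulen
    · -- chain condition
      intro x hx y hy
      rcases List.mem_append.1 hx with hx' | hx' <;> rcases List.mem_append.1 hy with hy' | hy'
      · exact h5 x hx' y hy'
      · simp only [List.mem_singleton] at hy'; subst hy'
        exact Or.inr (habove x hx')
      · simp only [List.mem_singleton] at hx'; subst hx'
        exact Or.inl (habove y hy')
      · simp only [List.mem_singleton] at hx' hy'; subst hx'; subst hy'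
        exact Or.inl (le_refl _)
    · -- last vertex rank
      intro v hv
      rw [List.getLast?_concat] at hv
      simp only [Option.mem_some_iff] at hv
      subst hv
      have : rT u = ξ + 1 := by
        unfold rT
        rw [hu]
        exact List.getLastD_concat
      rw [this]
      exact hξ1

lemma nil_mem_UU {V : Type} {lam : Cardinal} {R : SimpleGraph ℕ} {H : SimpleGraph V}
    (hub : ∀ ξ, ξ < (Order.succ lam).ord →
      ∃ α, ξ ≤ α ∧ α < (Order.succ lam).ord ∧ Nonempty (Gg R α ↪g H)) :
    [] ∈ UU R lam H := by
  intro ξ hξ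
  obtain ⟨α, hξα, hαL, ⟨f⟩⟩ := hub ξ hξ
  exact ⟨α, hξα, hαL, f, [], by simp, fun i => absurd i.2 (by simp), by simp, by simp⟩

lemma step_UU {V : Type} {lam : Cardinal} {R : SimpleGraph ℕ} {H : SimpleGraph V}
    (hlam : Cardinal.aleph0 ≤ lam) (hV : Cardinal.mk V = lam)
    {s : List V} (hs : s ∈ UU R lam H) : ∃ v, s ++ [v] ∈ UU R lam H := by
  have hex : ∀ ξ, ξ < (Order.succ lam).ord → ∃ v, IsSXEmb R lam H (s ++ [v]) ξ :=
    fun ξ hξ => step_ext (hs (ξ + 1) (L_succ_lt hlam hξ))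
  by_contra hcon
  push_neg at hcon
  have hcon' : ∀ v : V, ∃ ξ, ξ < (Order.succ lam).ord ∧ ¬ IsSXEmb R lam H (s ++ [v]) ξ := by
    intro v
    have := hcon v
    unfold UU at this
    simp only [Set.mem_setOf_eq] at this
    push_neg at this
    obtain ⟨ξ, h1, h2⟩ := this
    exact ⟨ξ, h1, h2⟩
  choose g hg1 hg2 using hcon'
  have hξs : (⨆ v, g v) < (Order.succ lam).ord := by
    apply Ordinal.iSup_lt_ord
    · rw [(Cardinal.isRegular_succ hlam).cof_eq, hV]
      exact Order.lt_succ lam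
    · exact hg1
  obtain ⟨v, hv⟩ := hex _ hξs
  exact hg2 v (hv.mono (Ordinal.le_iSup g v))

noncomputable def seqU {V : Type} (R : SimpleGraph ℕ) (lam : Cardinal) (H : SimpleGraph V)
    (hnil : [] ∈ UU R lam H)
    (hstep : ∀ s ∈ UU R lam H, ∃ v, s ++ [v] ∈ UU R lam H) :
    ℕ → {l : List V // l ∈ UU R lam H}
  | 0 => ⟨[], hnil⟩
  | n + 1 =>
    let p := seqU R lam H hnil hstep n
    ⟨p.1 ++ [Classical.choose (hstep p.1 p.2)], Classical.choose_spec (hstep p.1 p.2)⟩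

lemma seqU_len {V : Type} (R : SimpleGraph ℕ) (lam : Cardinal) (H : SimpleGraph V)
    (hnil : [] ∈ UU R lam H)
    (hstep : ∀ s ∈ UU R lam H, ∃ v, s ++ [v] ∈ UU R lam H) (n : ℕ) :
    (seqU R lam H hnil hstep n).1.length = n := by
  induction n with
  | zero => rfl
  | succ n ih => simp [seqU, ih]

lemma seqU_prefix {V : Type} (R : SimpleGraph ℕ) (lam : Cardinal) (H : SimpleGraph V)
    (hnil : [] ∈ UU R lam H)
    (hstep : ∀ s ∈ UU R lam H, ∃ v, s ++ [v] ∈ UU R lam H) {m n : ℕ} (h : m ≤ n) :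
    (seqU R lam H hnil hstep m).1 <+: (seqU R lam H hnil hstep n).1 := by
  induction n with
  | zero =>
    have : m = 0 := Nat.le_zero.1 h
    subst this
    exact List.prefix_refl _
  | succ n ih =>
    rcases Nat.le_succ_iff.1 h with h' | h'
    · exact (ih h').trans (List.prefix_append _ _)
    · subst h'
      exact List.prefix_refl _

/-- The main lemma: if `Gg R α` embeds into `H` for unboundedly many `α < λ⁺`,
then `R` embeds into `H`. -/
lemma rado_emb {V : Type} {lam : Cardinal} (hlam : Cardinal.aleph0 ≤ lam)
    (hV : Cardinal.mk V = lam) {R : SimpleGraph ℕ} {H : SimpleGraph V}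
    (hub : ∀ ξ, ξ < (Order.succ lam).ord →
      ∃ α, ξ ≤ α ∧ α < (Order.succ lam).ord ∧ Nonempty (Gg R α ↪g H)) :
    Nonempty (R ↪g H) := by
  have hnil : [] ∈ UU R lam H := nil_mem_UU hub
  have hstep : ∀ s ∈ UU R lam H, ∃ v, s ++ [v] ∈ UU R lam H :=
    fun s hs => step_UU hlam hV hs
  set q := seqU R lam H hnil hstep with hq
  have hlen : ∀ n, (q n).1.length = n := seqU_len R lam H hnil hstep
  have hne : ∀ n, (q (n+1)).1 ≠ [] := by
    intro n h
    have := hlen (n+1)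
    rw [h] at this
    simp at this
  set vv : ℕ → V := fun n => (q (n+1)).1.getLast (hne n) with hvv
  have hkey : ∀ (n i : ℕ) (hi : i < n), (q n).1[i]'(by rw [hlen]; exact hi) = vv i := by
    intro n i hi
    have hpre : (q (i+1)).1 <+: (q n).1 := seqU_prefix R lam H hnil hstep hi
    have h1 : (q (i+1)).1[i]'(by rw [hlen]; omega) = vv i := by
      rw [hvv]
      simp only
      rw [List.getLast_eq_getElem]
      congr 1
      rw [hlen]
      omega
    rw [← List.IsPrefix.getElem hpre, h1]
    rw [hlen]; omega
  -- the adjacency transfer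
  have hadj : ∀ i j : ℕ, i ≠ j → (H.Adj (vv i) (vv j) ↔ R.Adj i j) ∧ vv i ≠ vv j := by
    intro i j hij
    set n := max i j + 1 with hn
    have hi : i < n := by omega
    have hj : j < n := by omega
    obtain ⟨α, -, -, f, t, h3, h4, h5, -⟩ := (q n).2 0 (L_pos hlam)
    have htlen : t.length = n := by
      have := congrArg List.length h3
      rw [hlen n, List.length_map] at this
      exact this.symm
    have hti : i < t.length := htlen ▸ hi
    have htj : j < t.length := htlen ▸ hj
    have hvi : vv i = f (t[i]'hti) := by
      rw [← hkey n i hi]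
      have := congrArg (fun l => l[i]?) h3
      simp only [List.getElem?_map] at this
      rw [List.getElem?_eq_getElem (by rw [hlen]; exact hi)] at this
      rw [List.getElem?_eq_getElem hti] at this
      simp only [Option.map_some] at this
      exact Option.some.inj this
    have hvj : vv j = f (t[j]'htj) := by
      rw [← hkey n j hj]
      have := congrArg (fun l => l[j]?) h3
      simp only [List.getElem?_map] at this
      rw [List.getElem?_eq_getElem (by rw [hlen]; exact hj)] at this
      rw [List.getElem?_eq_getElem htj] at this
      simp only [Option.map_some] at this
      exact Option.some.inj this
    have hdti : dT (t[i]'hti) = i := by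
      have := h4 ⟨i, hti⟩
      simpa using this
    have hdtj : dT (t[j]'htj) = j := by
      have := h4 ⟨j, htj⟩
      simpa using this
    have htij : (t[i]'hti) ≠ (t[j]'htj) := by
      intro h
      rw [← hdti, ← hdtj, h] at hij
      exact hij rfl
    constructor
    · rw [hvi, hvj, SimpleGraph.Embedding.map_adj_iff]
      constructor
      · rintro ⟨-, -, hRa⟩
        rwa [hdti, hdtj] at hRa
      · intro hR
        exact ⟨htij, h5 _ (List.getElem_mem _) _ (List.getElem_mem _), by rwa [hdti, hdtj]⟩
    · rw [hvi, hvj]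
      exact fun h => htij (f.injective h)
  refine ⟨⟨⟨vv, ?_⟩, ?_⟩⟩
  · intro a b hab
    by_contra hne'
    exact (hadj a b hne').2 hab
  · intro a b
    by_cases h : a = b
    · subst h
      exact iff_of_false (H.irrefl) (R.irrefl)
    · exact (hadj a b h).1


lemma noRay_map {V : Type} {α : Ordinal} (R : SimpleGraph ℕ) (e : TT α ↪ V) :
    ¬ SubCopy rayG ((Gg R α).map e) := by
  rintro ⟨f, hf⟩
  have hadj : ∀ n : ℕ, ((Gg R α).map e).Adj (f n) (f (n + 1)) := by
    intro n
    apply hf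
    rw [rayG, SimpleGraph.fromRel_adj]
    exact ⟨by omega, Or.inl rfl⟩
  have hadj' : ∀ n : ℕ, ∃ x y : TT α, (Gg R α).Adj x y ∧ e x = f n ∧ e y = f (n + 1) :=
    fun n => (SimpleGraph.map_adj _ _ _ _).1 (hadj n)
  choose x y hxy hx hy using hadj'
  have hyx : ∀ n, y n = x (n + 1) := fun n => e.injective ((hy n).trans (hx (n + 1)).symm)
  have hinj : Function.Injective x := by
    intro m n h
    exact f.injective ((hx m).symm.trans (by rw [h, hx n]))
  have hcomp : ∀ n, x n ≤ x (n + 1) ∨ x (n + 1) ≤ x n := by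
    intro n
    have := (hxy n).2.1
    rwa [hyx n] at this
  exact no_chain_seq α x hinj hcomp

/-- any class `𝔉` with `Forb_λ(P_ω) ⊆ 𝔉 ⊆ Forb^ind_λ(R)` has cofinality
at least `λ⁺`: no family of at most `λ` members is cofinal. -/
theorem stmt15 {V : Type} (lam : Cardinal) (hlam : Cardinal.aleph0 ≤ lam)
    (hV : Cardinal.mk V = lam) (F : Set (SimpleGraph V))
    (hForb : ∀ G : SimpleGraph V, ¬ SubCopy rayG G → G ∈ F)
    (hInd : ∀ H ∈ F, ∀ R : SimpleGraph ℕ, IsRado R → ¬ Nonempty (R ↪g H))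
    (I : Type) (hI : Cardinal.mk I ≤ lam) (Hs : I → SimpleGraph V)
    (hHs : ∀ i, Hs i ∈ F) :
    ∃ G' ∈ F, ∀ i, ¬ Nonempty (G' ↪g Hs i) := by
  set L := (Order.succ lam).ord with hL
  have hbnd : ∀ i, ∃ b, b < L ∧ ∀ α, b ≤ α → α < L → ¬ Nonempty (Gg radoG α ↪g Hs i) := by
    intro i
    by_contra hc
    push_neg at hc
    exact hInd (Hs i) (hHs i) radoG radoG_isRado (rado_emb hlam hV hc)
  choose b hb1 hb2 using hbnd
  have hα : (⨆ i, b i) < L := by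
    apply Ordinal.iSup_lt_ord
    · rw [(Cardinal.isRegular_succ hlam).cof_eq]
      exact lt_of_le_of_lt hI (Order.lt_succ lam)
    · exact hb1
  obtain ⟨e⟩ := TT_emb hlam hV hα
  refine ⟨(Gg radoG (⨆ i, b i)).map e, hForb _ (noRay_map radoG e), ?_⟩
  intro i hg
  obtain ⟨g⟩ := hg
  have hemb : Nonempty (Gg radoG (⨆ i, b i) ↪g Hs i) :=
    ⟨(SimpleGraph.Embedding.map e _).trans g⟩
  exact hb2 i _ (Ordinal.le_iSup b i) hα hemb
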